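/- For all k ≥ 0 and all n with 0 ≤ n ≤ 2^(2k) − 1, s(n + 2^(2k+1)) = s(n) + 2^(k+1); and for all n with 2^(2k) ≤ n ≤ 2^(2k+1) − 1, s(n + 2^(2k+1)) = −s(n) + 2^(k+2). -/
import Mathlib

def rs : ℕ → ℤ
  | 0 => 1
  | (n+1) =>
    if (n+1) % 2 = 0 then rs ((n+1)/2)
    else (-1)^((n+1)/2) * rs ((n+1)/2)
decreasing_by all_goals exact Nat.div_lt_self (Nat.succ_pos n) (by norm_num)

def s (n : ℕ) : ℤ := ∑ i ∈ Finset.range (n+1), rs i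

def t (n : ℕ) : ℤ := ∑ i ∈ Finset.range (n+1), (-1)^i * rs i

lemma rs_even (j : ℕ) : rs (2*j) = rs j := by
  cases j with
  | zero => rfl
  | succ m =>
    rw [show 2*(m+1) = (2*m+1)+1 by ring, rs]
    have h1 : (2*m+1+1) % 2 = 0 := by omega
    have h2 : (2*m+1+1) / 2 = m+1 := by omega
    simp [h1, h2]

lemma rs_odd (j : ℕ) : rs (2*j+1) = (-1)^j * rs j := by
  cases j with
  | zero => simp [rs]
  | succ m =>
    rw [show 2*(m+1)+1 = (2*m+2)+1 by ring, rs]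
    have h1 : (2*m+2+1) % 2 = 1 := by omega
    have h2 : (2*m+2+1) / 2 = m+1 := by omega
    simp [h1, h2]

lemma key : ∀ m : ℕ, ∀ n : ℕ, n < 2^(m+1) →
    rs (n + 2^(m+1)) = (if 2^m ≤ n then -1 else 1) * rs n := by
  intro m
  induction m with
  | zero =>
    intro n hn
    interval_cases n
    · show rs 2 = _
      simp [show rs 2 = rs 1 from rs_even 1, show rs 1 = rs 0 by
        simpa using rs_odd 0]
    · show rs 3 = _
      have := rs_odd 1
      norm_num at this ⊢
      simp [this, show rs 1 = rs 0 by simpa using rs_odd 0, rs]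
  | succ m ih =>
    intro n hn
    rcases Nat.even_or_odd n with ⟨j, hj⟩ | ⟨j, hj⟩
    · subst hj
      have hj2 : j < 2^(m+1) := by
        have : 2^(m+1+1) = 2 * 2^(m+1) := by ring
        omega
      have e1 : j + j + 2^(m+1+1) = 2 * (j + 2^(m+1)) := by ring
      rw [e1, rs_even, ih j hj2, show j + j = 2*j by ring, rs_even]
      have : 2^(m+1) ≤ 2*j ↔ 2^m ≤ j := by
        have : 2^(m+1) = 2 * 2^m := by ring
        omega
      by_cases h : 2^m ≤ j <;> simp [h, this]
    · subst hj
      have hj2 : j < 2^(m+1) := by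
        have : 2^(m+1+1) = 2 * 2^(m+1) := by ring
        omega
      have e1 : 2*j + 1 + 2^(m+1+1) = 2 * (j + 2^(m+1)) + 1 := by ring
      rw [e1, rs_odd, ih j hj2, rs_odd]
      have hpow : (-1 : ℤ)^(j + 2^(m+1)) = (-1)^j := by
        rw [pow_add]
        have : Even (2^(m+1)) := by
          exact (Nat.even_pow).mpr ⟨even_two, by omega⟩
        simp [Even.neg_one_pow this]
      rw [hpow]
      have hiff : 2^(m+1) ≤ 2*j+1 ↔ 2^m ≤ j := by
        have : 2^(m+1) = 2 * 2^m := by ring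
        omega
      by_cases h : 2^m ≤ j <;> simp [h, hiff]

lemma sum_split (f : ℕ → ℤ) (a b : ℕ) :
    ∑ i ∈ Finset.range (a+b), f i
      = ∑ i ∈ Finset.range a, f i + ∑ i ∈ Finset.range b, f (a+i) := by
  induction b with
  | zero => simp
  | succ b ih =>
    rw [show a + (b+1) = (a+b)+1 by ring, Finset.sum_range_succ,
      Finset.sum_range_succ, ih]
    ring


def A (m : ℕ) : ℤ := ∑ i ∈ Finset.range (2^m), rs i

lemma A_step (m : ℕ) : A (m+2) = 2 * A m := by
  set T := ∑ i ∈ Finset.range (2^m), rs (2^m + i) with hT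
  have hA1 : A (m+1) = A m + T := by
    simp only [A, hT, show (2:ℕ)^(m+1) = 2^m + 2^m by ring, sum_split]
  have hA2 : A (m+2) = A (m+1) + ∑ i ∈ Finset.range (2^(m+1)), rs (2^(m+1) + i) := by
    simp only [A, show (2:ℕ)^(m+2) = 2^(m+1) + 2^(m+1) by ring, sum_split]
  have e1 : ∑ i ∈ Finset.range (2^(m+1)), rs (2^(m+1)+i)
      = ∑ i ∈ Finset.range (2^(m+1)), (if 2^m ≤ i then -1 else 1) * rs i :=
    Finset.sum_congr rfl fun i hi => by
      rw [add_comm]; exact key m i (Finset.mem_range.mp hi)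
  have e2 : ∑ i ∈ Finset.range (2^(m+1)), (if 2^m ≤ i then (-1:ℤ) else 1) * rs i
      = A m - T := by
    rw [show (2:ℕ)^(m+1) = 2^m + 2^m by ring, sum_split]
    have l : ∀ i ∈ Finset.range (2^m),
        (if 2^m ≤ i then (-1:ℤ) else 1) * rs i = rs i := fun i hi => by
      simp [Nat.not_le.mpr (Finset.mem_range.mp hi)]
    have r : ∀ i ∈ Finset.range (2^m),
        (if 2^m ≤ 2^m + i then (-1:ℤ) else 1) * rs (2^m + i) = -rs (2^m + i) :=
      fun i hi => by simp
    rw [Finset.sum_congr rfl l, Finset.sum_congr rfl r]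
    simp only [A, hT, Finset.sum_neg_distrib]
    ring
  rw [hA2, e1, e2, hA1]; ring

lemma A0 : A 0 = 1 := by simp [A, rs]
lemma A1 : A 1 = 2 := by
  rw [A, show (2:ℕ)^1 = 2 from rfl, Finset.sum_range_succ, Finset.sum_range_one,
    show rs 1 = rs 0 by simpa using rs_odd 0]
  simp [rs]

lemma A_even (k : ℕ) : A (2*k) = 2^k := by
  induction k with
  | zero => simpa using A0
  | succ k ih =>
    rw [show 2*(k+1) = 2*k+2 by ring, A_step, ih]; ring

lemma A_odd (k : ℕ) : A (2*k+1) = 2^(k+1) := by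
  induction k with
  | zero => simpa using A1
  | succ k ih =>
    rw [show 2*(k+1)+1 = (2*k+1)+2 by ring, A_step, ih]; ring

lemma s_shift (k n : ℕ) :
    s (n + 2^(2*k+1)) = A (2*k+1) + ∑ i ∈ Finset.range (n+1), rs (2^(2*k+1) + i) := by
  rw [s, show n + 2^(2*k+1) + 1 = 2^(2*k+1) + (n+1) by ring, sum_split]
  rfl

theorem stmt9 : ∀ k : ℕ,
    (∀ n : ℕ, n ≤ 2^(2*k) - 1 → s (n + 2^(2*k+1)) = s n + 2^(k+1)) ∧
    (∀ n : ℕ, 2^(2*k) ≤ n → n ≤ 2^(2*k+1) - 1 → s (n + 2^(2*k+1)) = -s n + 2^(k+2)) := by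
  intro k
  have hp0 : 0 < 2^(2*k) := Nat.two_pow_pos _
  have hp1 : 0 < 2^(2*k+1) := Nat.two_pow_pos _
  constructor
  · intro n hn
    have hn' : n < 2^(2*k) := by omega
    have e : ∀ i ∈ Finset.range (n+1), rs (2^(2*k+1) + i) = rs i := by
      intro i hi
      have hi' : i < 2^(2*k) := by
        have := Finset.mem_range.mp hi; omega
      have hi2 : i < 2^(2*k+1) := by
        have : 2^(2*k+1) = 2^(2*k) + 2^(2*k) := by ring
        omega
      rw [add_comm, key (2*k) i hi2]
      simp [Nat.not_le.mpr hi']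
    rw [s_shift, Finset.sum_congr rfl e, A_odd]
    show _ = s n + _
    rw [s]; ring
  · intro n h1 h2
    have hn' : n < 2^(2*k+1) := by omega
    have hdbl : 2^(2*k+1) = 2^(2*k) + 2^(2*k) := by ring
    have e : ∀ i ∈ Finset.range (n+1), rs (2^(2*k+1) + i)
        = (if 2^(2*k) ≤ i then -1 else 1) * rs i := by
      intro i hi
      have hi2 : i < 2^(2*k+1) := by
        have := Finset.mem_range.mp hi; omega
      rw [add_comm]; exact key (2*k) i hi2
    rw [s_shift, Finset.sum_congr rfl e]
    have hsz : n + 1 = 2^(2*k) + (n + 1 - 2^(2*k)) := by omega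
    rw [hsz, sum_split]
    have l : ∀ i ∈ Finset.range (2^(2*k)),
        (if 2^(2*k) ≤ i then (-1:ℤ) else 1) * rs i = rs i := fun i hi => by
      simp [Nat.not_le.mpr (Finset.mem_range.mp hi)]
    have r : ∀ i ∈ Finset.range (n + 1 - 2^(2*k)),
        (if 2^(2*k) ≤ 2^(2*k) + i then (-1:ℤ) else 1) * rs (2^(2*k) + i)
          = -rs (2^(2*k) + i) := fun i hi => by simp
    rw [Finset.sum_congr rfl l, Finset.sum_congr rfl r, Finset.sum_neg_distrib]
    have hsn : s n = A (2*k) + ∑ i ∈ Finset.range (n + 1 - 2^(2*k)), rs (2^(2*k) + i) := by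
      rw [s, hsz, sum_split]; simp [A]
    have hAe := A_even k
    have hAo := A_odd k
    have : (∑ i ∈ Finset.range (2^(2*k)), rs i) = A (2*k) := rfl
    rw [this]
    linarith [hsn, hAe, hAo, pow_succ (2:ℤ) (k+1), pow_succ (2:ℤ) k]
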